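/- There exist three universal constants 0 < ε₀ < 1, N₀ ≥ 1, and c₀ ≥ 1 such that the following is true: for every natural number N ≥ N₀ and every real number ε with c₀/√N ≤ |ε| ≤ ε₀, one has e^{−1}(1 − 0.51ε²) ≤ (1+ε)·(1 − (1+ε)/N)^{N−1} ≤ e^{−1}(1 − 0.49ε²). -/

import Mathlib

set_option maxHeartbeats 1600000



private lemma aux1' (β e2 : ℝ) (hβ : 0 < β) (h : 10^6*β ≤ e2) (he2 : 0 ≤ e2) :
    1 - 0.51*e2 ≤ (1 - e2/2 - e2*(1/1000))*(1-9*β) := by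
  nlinarith [mul_nonneg hβ.le he2]

private lemma aux2' (β e2 : ℝ) (hβ : 0 < β) (h : 10^6*β ≤ e2) (he2 : 0 ≤ e2) :
    (1 - e2/2 + e2*(1/1000))*(1+18*β) ≤ 1 - 0.49*e2 := by
  nlinarith [mul_nonneg hβ.le he2]

/-- There exist universal constants `0 < ε₀ < 1`, `N₀ ≥ 1`, `c₀ ≥ 1` such that for every
natural number `N ≥ N₀` and every real `ε` with `c₀/√N ≤ |ε| ≤ ε₀`,
`e⁻¹(1 − 0.51ε²) ≤ (1+ε)(1 − (1+ε)/N)^{N−1} ≤ e⁻¹(1 − 0.49ε²)`. -/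
theorem aux_calc_bound :
    ∃ (ε₀ c₀ : ℝ) (N₀ : ℕ), 0 < ε₀ ∧ ε₀ < 1 ∧ 1 ≤ N₀ ∧ 1 ≤ c₀ ∧
      ∀ N : ℕ, N₀ ≤ N → ∀ ε : ℝ, c₀ / Real.sqrt N ≤ |ε| → |ε| ≤ ε₀ →
        (Real.exp 1)⁻¹ * (1 - 0.51 * ε ^ 2) ≤ (1 + ε) * (1 - (1 + ε) / N) ^ (N - 1) ∧
          (1 + ε) * (1 - (1 + ε) / N) ^ (N - 1) ≤ (Real.exp 1)⁻¹ * (1 - 0.49 * ε ^ 2) := by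
  refine ⟨1/1000, 1000, 1, by norm_num, by norm_num, le_refl 1, by norm_num, ?_⟩
  intro N hN ε h1 h2
  have hN1 : (1:ℝ) ≤ (N:ℝ) := by exact_mod_cast hN
  have hNpos : (0:ℝ) < (N:ℝ) := by linarith
  have hsq : (0:ℝ) < Real.sqrt N := Real.sqrt_pos.mpr hNpos
  have hε0 : 0 < |ε| := lt_of_lt_of_le (by positivity) h1
  -- √N ≥ 10^6, N ≥ 10^12
  have hs : (10:ℝ)^6 ≤ Real.sqrt N := by
    have h3 : (1000:ℝ)/Real.sqrt N ≤ 1/1000 := le_trans h1 h2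
    rw [div_le_div_iff₀ hsq (by norm_num)] at h3
    nlinarith
  have hNbig : (10:ℝ)^12 ≤ (N:ℝ) := by
    nlinarith [Real.sq_sqrt hNpos.le]
  -- ε² ≥ 10⁶/N, phrased with β := 1/N
  set β : ℝ := 1/(N:ℝ) with hβdef
  have hβpos : 0 < β := by positivity
  have hβsmall : β ≤ 1/(10:ℝ)^12 := by
    rw [hβdef, div_le_div_iff₀ hNpos (by norm_num)]; linarith
  have hε2 : (10:ℝ)^6 * β ≤ ε^2 := by
    have hsq2 : (1000/Real.sqrt N)^2 ≤ |ε|^2 := by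
      apply pow_le_pow_left₀ (by positivity) h1
    rw [sq_abs] at hsq2
    calc (10:ℝ)^6 * β = (1000/Real.sqrt N)^2 := by
          rw [div_pow, Real.sq_sqrt hNpos.le, hβdef]; ring
      _ ≤ ε^2 := hsq2
  have hεl : -(1/1000) ≤ ε := (abs_le.mp h2).1
  have hεu : ε ≤ 1/1000 := (abs_le.mp h2).2
  -- x = (1+ε)/N
  set x : ℝ := (1+ε)/(N:ℝ) with hxdef
  have hxeq : x = (1+ε) * β := by rw [hxdef, hβdef]; ring
  have hxpos : 0 < x := by rw [hxeq]; exact mul_pos (by linarith) hβpos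
  have hxsmall : x ≤ 2 * β := by nlinarith
  have hxhalf : x ≤ 1/2 := by nlinarith
  have h1x : 0 < 1 - x := by linarith
  -- log bounds
  set L : ℝ := Real.log (1-x) with hLdef
  have hLu : L ≤ -x := by
    have := Real.log_le_sub_one_of_pos h1x
    linarith
  have hLl : -x - 2*x^2 ≤ L := by
    have hinv : Real.log (1-x)⁻¹ ≤ (1-x)⁻¹ - 1 := Real.log_le_sub_one_of_pos (by positivity)
    rw [Real.log_inv] at hinv
    have hmul : (1-x)⁻¹ * (1-x) = 1 := inv_mul_cancel₀ (ne_of_gt h1x)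
    nlinarith [sq_nonneg x, hinv, hmul]
  -- rewrite the power as exp
  have hMcast : ((N-1:ℕ):ℝ) = (N:ℝ) - 1 := by
    rw [Nat.cast_sub hN]; norm_num
  set M : ℝ := (N:ℝ) - 1 with hMdef
  have hM0 : 0 ≤ M := by linarith
  have hpow : (1 - x) ^ (N-1) = Real.exp (M * L) := by
    rw [hLdef, ← Real.exp_log h1x, ← Real.exp_nat_mul, hMcast, Real.log_exp]
  -- δ := M*L + (1+ε)
  set δ : ℝ := M * L + (1 + ε) with hδdef
  have hMx : M * x = (1+ε) - (1+ε)*β := by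
    rw [hxeq, hMdef, hβdef]; field_simp
  have hδu : δ ≤ 2*β := by
    have : M * L ≤ M * (-x) := mul_le_mul_of_nonneg_left hLu hM0
    nlinarith
  have hδl : -(9*β) ≤ δ := by
    have h4 : M * (-x - 2*x^2) ≤ M * L := mul_le_mul_of_nonneg_left hLl hM0
    have hMx2 : M * x^2 ≤ 4*β := by
      have hMN : M ≤ (N:ℝ) := by rw [hMdef]; linarith
      have : M * x^2 ≤ (N:ℝ) * x^2 := by nlinarith [sq_nonneg x]
      have hNx2 : (N:ℝ) * x^2 = (1+ε)^2 * β := by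
        rw [hxdef, hβdef]; field_simp
      nlinarith
    nlinarith
  have hδabs : |δ| ≤ 9*β := abs_le.mpr ⟨hδl, by nlinarith⟩
  -- exp δ bounds
  have hδsmall : |δ| ≤ 1/2 := by nlinarith
  have hEl : 1 - 9*β ≤ Real.exp δ := by
    have := Real.add_one_le_exp δ
    have := abs_le.mp hδabs
    linarith
  have hEu : Real.exp δ ≤ 1 + 18*β := by
    have h5 : Real.exp δ ≤ Real.exp |δ| := Real.exp_le_exp.mpr (le_abs_self δ)
    have h6 : 1 - |δ| ≤ Real.exp (-|δ|) := by
      have := Real.add_one_le_exp (-|δ|); linarith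
    have h7 : Real.exp |δ| * Real.exp (-|δ|) = 1 := by
      rw [← Real.exp_add]; simp
    have h8 : Real.exp |δ| ≤ 1/(1-|δ|) := by
      rw [le_div_iff₀ (by linarith)]
      nlinarith [Real.exp_pos |δ|]
    have h9 : 1/(1-|δ|) ≤ 1 + 2*|δ| := by
      rw [div_le_iff₀ (by linarith)]
      nlinarith [abs_nonneg δ]
    have := abs_le.mp hδabs
    calc Real.exp δ ≤ Real.exp |δ| := h5
      _ ≤ 1/(1-|δ|) := h8
      _ ≤ 1 + 2*|δ| := h9
      _ ≤ 1 + 18*β := by linarith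
  -- (1+ε) exp(-ε) bounds via exp_bound with n = 3
  have hexpb : |Real.exp (-ε) - (1 - ε + ε^2/2)| ≤ |ε|^3 * (1/4) := by
    have hb := Real.exp_bound (x := -ε) (by rw [abs_neg]; linarith) (n := 3) (by norm_num)
    have hsum : ∑ m ∈ Finset.range 3, (-ε) ^ m / (m.factorial : ℝ) = 1 - ε + ε^2/2 := by
      simp [Finset.sum_range_succ, Nat.factorial]; ring
    rw [hsum, abs_neg] at hb
    calc |Real.exp (-ε) - (1 - ε + ε^2/2)| ≤ |ε|^3 * ((3:ℕ).succ / ((3:ℕ).factorial * 3)) := hb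
      _ ≤ |ε|^3 * (1/4) := by
          apply mul_le_mul_of_nonneg_left _ (by positivity)
          norm_num [Nat.factorial]
  have habs3 : |ε|^3 ≤ (1/1000) * ε^2 := by
    have : |ε|^3 = |ε| * ε^2 := by rw [← sq_abs]; ring
    rw [this]
    nlinarith [sq_nonneg ε]
  have hAbound : |(1+ε) * Real.exp (-ε) - (1 - ε^2/2)| ≤ ε^2 * (1/1000) := by
    have h10 := abs_le.mp hexpb
    have h11 : (1+ε) * (1 - ε + ε^2/2) = 1 - ε^2/2 + ε^3/2 := by ring
    have h1ε : (0:ℝ) < 1 + ε := by linarith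
    have hε3 : |ε^3| ≤ (1/1000) * ε^2 := by
      rw [abs_pow]; exact habs3
    have h12 := abs_le.mp hε3
    rw [abs_le]
    constructor <;> nlinarith [abs_nonneg ε, sq_nonneg ε]
  -- assemble
  have hkey : (1+ε) * (1 - (1+ε)/(N:ℝ)) ^ (N-1)
      = (Real.exp 1)⁻¹ * ((1+ε) * Real.exp (-ε) * Real.exp δ) := by
    rw [← hxdef, hpow]
    have : M * L = δ - 1 - ε := by rw [hδdef]; ring
    rw [this]
    rw [show δ - 1 - ε = (-1) + (-ε) + δ by ring, Real.exp_add, Real.exp_add, Real.exp_neg]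
    ring
  rw [hkey]
  clear_value β x L M δ
  have hepos : (0:ℝ) < (Real.exp 1)⁻¹ := by positivity
  have hA := abs_le.mp hAbound
  have hEpos : (0:ℝ) < Real.exp δ := Real.exp_pos δ
  constructor
  · apply mul_le_mul_of_nonneg_left _ hepos.le
    have hAl : 1 - ε^2/2 - ε^2*(1/1000) ≤ (1+ε) * Real.exp (-ε) := by linarith
    have hApos : 0 < (1+ε) * Real.exp (-ε) := mul_pos (by linarith) (Real.exp_pos _)
    calc 1 - 0.51 * ε^2 ≤ (1 - ε^2/2 - ε^2*(1/1000)) * (1 - 9*β) :=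
          aux1' β (ε^2) hβpos hε2 (sq_nonneg ε)
      _ ≤ ((1+ε) * Real.exp (-ε)) * Real.exp δ := by
          apply mul_le_mul hAl hEl (by linarith) hApos.le
  · apply mul_le_mul_of_nonneg_left _ hepos.le
    have hAu : (1+ε) * Real.exp (-ε) ≤ 1 - ε^2/2 + ε^2*(1/1000) := by linarith
    calc ((1+ε) * Real.exp (-ε)) * Real.exp δ
        ≤ (1 - ε^2/2 + ε^2*(1/1000)) * (1 + 18*β) := by
          apply mul_le_mul hAu hEu hEpos.le (by nlinarith [sq_nonneg ε])
      _ ≤ 1 - 0.49 * ε^2 := aux2' β (ε^2) hβpos hε2 (sq_nonneg ε)
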